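/- Let φ : X → Y be a spectral quotient map of spectral spaces with Y finite. Then φ is a topological quotient map. -/

import Mathlib

/-- A spectral space: quasi-compact, T0, sober, and the quasi-compact open subsets
form a basis closed under finite intersection. -/
def IsSpectralSpace (X : Type*) [TopologicalSpace X] : Prop :=
  CompactSpace X ∧ T0Space X ∧ QuasiSober X ∧
  TopologicalSpace.IsTopologicalBasis {U : Set X | IsOpen U ∧ IsCompact U} ∧
  ∀ U V : Set X, IsOpen U → IsCompact U → IsOpen V → IsCompact V → IsCompact (U ∩ V)

/-- A spectral quotient map: a surjective spectral map such that any subset of the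
target whose preimage is quasi-compact open is itself quasi-compact open. -/
def IsSpectralQuotientMap {X Y : Type*} [TopologicalSpace X] [TopologicalSpace Y]
    (φ : X → Y) : Prop :=
  Function.Surjective φ ∧ IsSpectralMap φ ∧
  ∀ C : Set Y, IsOpen (φ ⁻¹' C) → IsCompact (φ ⁻¹' C) → IsOpen C ∧ IsCompact C

/-- A spectral quotient map with finite target is a topological quotient map. -/
theorem stmt_2 {X Y : Type*} [TopologicalSpace X] [TopologicalSpace Y]
    (hX : IsSpectralSpace X) (hY : IsSpectralSpace Y) [Finite Y] (φ : X → Y)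
    (hq : IsSpectralQuotientMap φ) :
    Topology.IsQuotientMap φ := by
  obtain ⟨hsurj, hspec, hcond⟩ := hq
  haveI : T0Space Y := hY.2.1
  rw [Topology.isQuotientMap_iff, and_comm, Topology.isCoinducing_iff]
  refine ⟨hsurj, fun C => ⟨fun hC => ?_, fun h => h.preimage hspec.continuous⟩⟩
  -- Step 1: every fiber of φ is compact.
  have fiber : ∀ w : Y, IsCompact (φ ⁻¹' {w}) := by
    intro w
    set V : Set Y := ⋂₀ {U | IsOpen U ∧ w ∈ U} with hVdef
    have hVopen : IsOpen V := Set.Finite.isOpen_sInter (Set.toFinite _) (fun U hU => hU.1)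
    have hsingle : ({w} : Set Y) = V ∩ closure {w} := by
      apply Set.eq_of_subset_of_subset
      · rintro x rfl
        exact ⟨Set.mem_sInter.2 (fun U hU => hU.2), subset_closure rfl⟩
      · rintro x ⟨hx1, hx2⟩
        have h1 : w ∈ closure ({x} : Set Y) := by
          rw [mem_closure_iff]
          intro o ho hwo
          exact ⟨x, (Set.mem_sInter.1 hx1) o ⟨ho, hwo⟩, rfl⟩
        have hxw : x ⤳ w := specializes_iff_mem_closure.2 h1
        have hwx : w ⤳ x := specializes_iff_mem_closure.2 hx2
        exact (hxw.antisymm hwx).eq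
    rw [hsingle, Set.preimage_inter]
    exact (hspec.isCompact_preimage_of_isOpen hVopen (Set.toFinite V).isCompact).inter_right
      (isClosed_closure.preimage hspec.continuous)
  -- Step 2: any subset of C has its preimage contained in a compact open inside φ⁻¹ C.
  have key : ∀ T : Set Y, T ⊆ C →
      ∃ K : Set X, IsOpen K ∧ IsCompact K ∧ φ ⁻¹' T ⊆ K ∧ K ⊆ φ ⁻¹' C := by
    intro T hT
    have hTc : IsCompact (φ ⁻¹' T) := by
      have hE : φ ⁻¹' T = ⋃ w ∈ T, φ ⁻¹' {w} := by
        ext x; simp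
      rw [hE]
      exact (Set.toFinite T).isCompact_biUnion (fun w _ => fiber w)
    have hcover : φ ⁻¹' T ⊆
        ⋃ (b : {b : Set X // (IsOpen b ∧ IsCompact b) ∧ b ⊆ φ ⁻¹' C}), b.1 := by
      intro x hx
      obtain ⟨v, hvB, hxv, hvu⟩ := hX.2.2.2.1.exists_subset_of_mem_open
        (Set.preimage_mono hT hx) hC
      exact Set.mem_iUnion.2 ⟨⟨v, hvB, hvu⟩, hxv⟩
    obtain ⟨t, ht⟩ := hTc.elim_finite_subcover _ (fun b => b.2.1.1) hcover
    exact ⟨⋃ b ∈ t, b.1, isOpen_biUnion (fun b _ => b.2.1.1),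
      t.finite_toSet.isCompact_biUnion (fun b _ => b.2.1.2), ht,
      Set.iUnion₂_subset (fun b _ => b.2.2)⟩
  -- Step 3: iterate T ↦ φ '' K until stabilization.
  classical
  rw [isOpen_iff_forall_mem_open]
  intro y hy
  set g : Set Y → Set Y := fun T => if h : T ⊆ C then φ '' (key T h).choose else T with hgdef
  set Tn : ℕ → Set Y := fun n => g^[n] {y} with hTndef
  have hgrow : ∀ T (h : T ⊆ C), T ⊆ g T ∧ g T ⊆ C := by
    intro T h
    obtain ⟨hKo, hKc, hK1, hK2⟩ := (key T h).choose_spec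
    constructor
    · intro z hz
      simp only [hgdef, dif_pos h]
      obtain ⟨x, hx⟩ := hsurj z
      exact ⟨x, hK1 (by simp [hx, hz]), hx⟩
    · simp only [hgdef, dif_pos h]
      rintro z ⟨x, hxK, rfl⟩
      exact hK2 hxK
  have hTC : ∀ n, Tn n ⊆ C := by
    intro n
    induction n with
    | zero => simpa [hTndef] using hy
    | succ k ih =>
      have : Tn (k+1) = g (Tn k) := Function.iterate_succ_apply' g k {y}
      rw [this]
      exact (hgrow _ ih).2
  have hstep : ∀ n, Tn n ⊆ Tn (n+1) := by
    intro n
    have : Tn (n+1) = g (Tn n) := Function.iterate_succ_apply' g n {y}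
    rw [this]
    exact (hgrow _ (hTC n)).1
  have hmono : Monotone Tn := monotone_nat_of_le_succ hstep
  obtain ⟨m, n, hmn, heq⟩ : ∃ m n, m < n ∧ Tn m = Tn n := by
    obtain ⟨a, b, hab, h⟩ := Finite.exists_ne_map_eq_of_infinite Tn
    rcases hab.lt_or_gt with h' | h'
    exacts [⟨a, b, h', h⟩, ⟨b, a, h', h.symm⟩]
  have hfix : g (Tn m) = Tn m := by
    have h1 : Tn (m+1) = g (Tn m) := Function.iterate_succ_apply' g m {y}
    have h2 : Tn (m+1) ⊆ Tn m := heq ▸ hmono hmn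
    exact subset_antisymm (h1 ▸ h2) (h1 ▸ hstep m)
  set T : Set Y := Tn m with hTdef
  have hT : T ⊆ C := hTC m
  obtain ⟨hKo, hKc, hK1, hK2⟩ := (key T hT).choose_spec
  have himg : φ '' (key T hT).choose = T := by
    have h1 := hfix
    rw [hgdef] at h1
    simpa only [dif_pos hT] using h1
  have hpre : φ ⁻¹' T = (key T hT).choose := by
    apply subset_antisymm hK1
    have h2 : (key T hT).choose ⊆ φ ⁻¹' (φ '' (key T hT).choose) :=
      Set.subset_preimage_image φ _
    rwa [himg] at h2
  have hTpo : IsOpen (φ ⁻¹' T) := by rw [hpre]; exact hKo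
  have hTpc : IsCompact (φ ⁻¹' T) := by rw [hpre]; exact hKc
  obtain ⟨hTopen, _⟩ := hcond T hTpo hTpc
  refine ⟨T, hT, hTopen, ?_⟩
  have : ({y} : Set Y) ⊆ Tn m := by
    have h0 : Tn 0 = {y} := rfl
    exact h0 ▸ hmono (Nat.zero_le m)
  exact this rfl
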